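/- For uniformly distributed samples on a rectangle [0,a] × [0,b] ⊆ ℝ², the probability that a uniform sample lies within Euclidean distance r of a fixed point x in the rectangle is at least min(1, πr²/(4ab)); i.e., the quarter-disk of radius r centered at any point of the rectangle intersected with the rectangle has area at least min(ab, πr²/4) when r ≤ min(a,b). -/

import Mathlib

open MeasureTheory Set Real intervalIntegral

lemma quarter_circle_integral : ∫ t in (0:ℝ)..1, Real.sqrt (1 - t^2) = Real.pi / 4 := by
  have hc : Continuous fun t : ℝ => Real.sqrt (1 - t^2) :=
    Real.continuous_sqrt.comp (by continuity)
  have h1 : ∫ t in (-1:ℝ)..0, Real.sqrt (1 - t^2) = ∫ t in (0:ℝ)..1, Real.sqrt (1 - t^2) := by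
    have := intervalIntegral.integral_comp_neg (a := (0:ℝ)) (b := 1)
      (fun t => Real.sqrt (1 - t^2))
    simp only [neg_sq, neg_zero] at this
    rw [← this]
  have h3 : ∫ t in (-1:ℝ)..1, Real.sqrt (1 - t^2)
      = (∫ t in (-1:ℝ)..0, Real.sqrt (1 - t^2)) + ∫ t in (0:ℝ)..1, Real.sqrt (1 - t^2) :=
    (intervalIntegral.integral_add_adjacent_intervals
      (hc.intervalIntegrable _ _) (hc.intervalIntegrable _ _)).symm
  have h2 := integral_sqrt_one_sub_sq
  rw [h1, h2] at h3
  linarith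

lemma quarter_circle_integral_r (r : ℝ) (hr : 0 < r) :
    ∫ t in (0:ℝ)..r, Real.sqrt (r^2 - t^2) = Real.pi * r^2 / 4 := by
  have h := intervalIntegral.integral_comp_mul_right (a := (0:ℝ)) (b := 1)
    (fun t => Real.sqrt (r^2 - t^2)) (ne_of_gt hr)
  simp only [zero_mul, one_mul, smul_eq_mul] at h
  have heq : ∀ s : ℝ, Real.sqrt (r^2 - (s*r)^2) = r * Real.sqrt (1 - s^2) := by
    intro s
    rw [show r^2 - (s*r)^2 = r^2 * (1 - s^2) by ring, Real.sqrt_mul (sq_nonneg r),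
      Real.sqrt_sq hr.le]
  simp only [heq] at h
  rw [intervalIntegral.integral_const_mul, quarter_circle_integral] at h
  have : (∫ t in (0:ℝ)..r, Real.sqrt (r^2 - t^2)) = r * (r * (Real.pi/4)) := by
    field_simp at h ⊢
    nlinarith [h]
  rw [this]; ring

lemma quarter_superadd_aux (r α β : ℝ) (hr : 0 < r) (hα0 : 0 ≤ α) (hαβ : α ≤ β)
    (hβr : β ≤ r) (hsum : r ≤ α + β) :
    Real.pi * r^2 / 4 ≤ (∫ t in (0:ℝ)..α, Real.sqrt (r^2-t^2))
      + ∫ t in (0:ℝ)..β, Real.sqrt (r^2-t^2) := by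
  have hc : Continuous fun t : ℝ => Real.sqrt (r^2 - t^2) :=
    Real.continuous_sqrt.comp (by continuity)
  have hc2 : Continuous fun t : ℝ => Real.sqrt (r^2 - (t + β)^2) :=
    Real.continuous_sqrt.comp (by continuity)
  have hβ0 : 0 ≤ β := le_trans hα0 hαβ
  have key : (∫ t in β..r, Real.sqrt (r^2-t^2)) ≤ ∫ t in (0:ℝ)..α, Real.sqrt (r^2-t^2) := by
    have h1 : (∫ t in β..r, Real.sqrt (r^2-t^2))
        = ∫ t in (0:ℝ)..(r-β), Real.sqrt (r^2-(t+β)^2) := by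
      rw [intervalIntegral.integral_comp_add_right (fun t => Real.sqrt (r^2-t^2)) β]
      norm_num
    have h2 : (∫ t in (0:ℝ)..(r-β), Real.sqrt (r^2-(t+β)^2))
        ≤ ∫ t in (0:ℝ)..(r-β), Real.sqrt (r^2-t^2) := by
      apply intervalIntegral.integral_mono_on (by linarith)
        (hc2.intervalIntegrable _ _) (hc.intervalIntegrable _ _)
      intro t ht
      apply Real.sqrt_le_sqrt
      nlinarith [ht.1]
    have h3 : (∫ t in (0:ℝ)..(r-β), Real.sqrt (r^2-t^2))
        ≤ ∫ t in (0:ℝ)..α, Real.sqrt (r^2-t^2) := by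
      apply intervalIntegral.integral_mono_interval le_rfl (by linarith) (by linarith)
        (Filter.Eventually.of_forall fun t => Real.sqrt_nonneg _)
        (hc.intervalIntegrable _ _)
    linarith
  have hsplit : (∫ t in (0:ℝ)..β, Real.sqrt (r^2-t^2)) + ∫ t in β..r, Real.sqrt (r^2-t^2)
      = ∫ t in (0:ℝ)..r, Real.sqrt (r^2-t^2) :=
    intervalIntegral.integral_add_adjacent_intervals
      (hc.intervalIntegrable _ _) (hc.intervalIntegrable _ _)
  have hG := quarter_circle_integral_r r hr
  linarith

lemma quarter_superadd (r α β : ℝ) (hr : 0 < r) (hα0 : 0 ≤ α) (hβ0 : 0 ≤ β)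
    (hαr : α ≤ r) (hβr : β ≤ r) (hsum : r ≤ α + β) :
    Real.pi * r^2 / 4 ≤ (∫ t in (0:ℝ)..α, Real.sqrt (r^2-t^2))
      + ∫ t in (0:ℝ)..β, Real.sqrt (r^2-t^2) := by
  rcases le_total α β with h | h
  · exact quarter_superadd_aux r α β hr hα0 h hβr hsum
  · rw [add_comm]
    exact quarter_superadd_aux r β α hr hβ0 h hαr (by linarith)

/-- In a rectangle `[0,a] × [0,b]`, the area of the intersection of the rectangle
with a Euclidean ball of radius `r ≤ min a b` centered at any point of the
rectangle is at least `min (a·b) (π r²/4)`. -/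
theorem rectangle_ball_area_bound
    (a b r : ℝ) (ha : 0 < a) (hb : 0 < b) (hr0 : 0 < r) (hr : r ≤ min a b)
    (R : Set (EuclideanSpace ℝ (Fin 2)))
    (hR : R = {p : EuclideanSpace ℝ (Fin 2) |
      p 0 ∈ Set.Icc (0:ℝ) a ∧ p 1 ∈ Set.Icc (0:ℝ) b})
    (x : EuclideanSpace ℝ (Fin 2)) (hx : x ∈ R) :
    ENNReal.ofReal (min (a * b) (Real.pi * r ^ 2 / 4)) ≤
      volume (Metric.ball x r ∩ R) := by
  rw [hR] at hx
  obtain ⟨hx0, hx1⟩ := hx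
  have hra : r ≤ a := le_trans hr (min_le_left _ _)
  have hrb : r ≤ b := le_trans hr (min_le_right _ _)
  set x0 := x 0 with hx0def
  set x1 := x 1 with hx1def
  set w : ℝ → ℝ := fun u => Real.sqrt (r^2 - (u - x0)^2) with hwdef
  set p := max 0 (x0 - r) with hpdef
  set q := min a (x0 + r) with hqdef
  set fL : ℝ → ℝ := fun u => max 0 (x1 - w u) with hfLdef
  set gU : ℝ → ℝ := fun u => min b (x1 + w u) with hgUdef
  set S : Set (ℝ × ℝ) := {z : ℝ × ℝ |
    (z.1 - x0)^2 + (z.2 - x1)^2 < r^2 ∧ z.1 ∈ Icc 0 a ∧ z.2 ∈ Icc 0 b} with hSdef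
  have hwcont : Continuous w :=
    Real.continuous_sqrt.comp (continuous_const.sub ((continuous_id.sub continuous_const).pow 2))
  have hwnn : ∀ u, 0 ≤ w u := fun u => Real.sqrt_nonneg _
  have hwr : ∀ u, w u ≤ r := by
    intro u
    calc w u ≤ Real.sqrt (r^2) :=
          Real.sqrt_le_sqrt (by nlinarith [sq_nonneg (u - x0)])
      _ = r := Real.sqrt_sq hr0.le
  have hp0 : 0 ≤ p := le_max_left _ _
  have hqa : q ≤ a := min_le_left _ _
  have hpx : x0 - r ≤ p := le_max_right _ _
  have hqx : q ≤ x0 + r := min_le_right _ _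
  have hpq : p ≤ q :=
    max_le (le_min ha.le (by linarith [hx0.1])) (le_min (by linarith [hx0.2]) (by linarith))
  -- measurability of S
  have hSm : MeasurableSet S := by
    have h1 : MeasurableSet {z : ℝ × ℝ | (z.1 - x0)^2 + (z.2 - x1)^2 < r^2} :=
      measurableSet_lt (by fun_prop) measurable_const
    have h2 : MeasurableSet {z : ℝ × ℝ | z.1 ∈ Icc (0:ℝ) a} :=
      measurable_fst measurableSet_Icc
    have h3 : MeasurableSet {z : ℝ × ℝ | z.2 ∈ Icc (0:ℝ) b} :=
      measurable_snd measurableSet_Icc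
    exact h1.inter (h2.inter h3)
  -- regionBetween ⊆ S
  have hTsub : regionBetween fL gU (Ioo p q) ⊆ S := by
    rintro ⟨u, v⟩ ⟨hu, hv⟩
    simp only [mem_Ioo] at hu hv
    have husq : (u - x0)^2 < r^2 := by nlinarith [hu.1, hu.2]
    have hwsq : w u ^ 2 = r^2 - (u - x0)^2 := Real.sq_sqrt (by nlinarith)
    have hv1 : x1 - w u < v := lt_of_le_of_lt (le_max_right _ _) hv.1
    have hv2 : v < x1 + w u := lt_of_lt_of_le hv.2 (min_le_right _ _)
    have hfL0 : (0:ℝ) ≤ fL u := le_max_left _ _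
    have hgUb : gU u ≤ b := min_le_left _ _
    refine ⟨?_, ⟨?_, ?_⟩, ⟨?_, ?_⟩⟩
    · have hvv : (v - x1)^2 < w u ^ 2 := by nlinarith
      nlinarith
    · linarith [hu.1]
    · linarith [hu.2]
    · linarith [hv.1]
    · linarith [hv.2]
  -- integrability
  have hfLc : Continuous fL := continuous_const.max (continuous_const.sub hwcont)
  have hgUc : Continuous gU := continuous_const.min (continuous_const.add hwcont)
  have hfLi : IntegrableOn fL (Ioo p q) :=
    (hfLc.integrableOn_Icc).mono_set Ioo_subset_Icc_self
  have hgUi : IntegrableOn gU (Ioo p q) :=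
    (hgUc.integrableOn_Icc).mono_set Ioo_subset_Icc_self
  have hwi : IntegrableOn w (Ioo p q) :=
    (hwcont.integrableOn_Icc).mono_set Ioo_subset_Icc_self
  have hfg : ∀ u ∈ Ioo p q, fL u ≤ gU u := by
    intro u _
    exact max_le (le_min hb.le (by linarith [hwnn u, hx1.1]))
      (le_min (by linarith [hwnn u, hx1.2]) (by linarith [hwnn u]))
  have hreg := volume_regionBetween_eq_integral hfLi hgUi measurableSet_Ioo hfg
  -- pointwise lower bound on gU - fL
  have hgf : ∀ u ∈ Ioo p q, w u ≤ (gU - fL) u := by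
    intro u _
    simp only [Pi.sub_apply]
    rcases le_total (x1 - w u) 0 with h | h
    · have h0 : max 0 (x1 - w u) = 0 := max_eq_left h
      have hmin : w u ≤ min b (x1 + w u) :=
        le_min (le_trans (hwr u) hrb) (by linarith [hx1.1])
      show w u ≤ min b (x1 + w u) - max 0 (x1 - w u)
      rw [h0]; linarith
    · have h0 : max 0 (x1 - w u) = x1 - w u := max_eq_right h
      have hmin : x1 ≤ min b (x1 + w u) := le_min hx1.2 (by linarith [hwnn u])
      show w u ≤ min b (x1 + w u) - max 0 (x1 - w u)
      rw [h0]; linarith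
  have hint1 : (∫ u in Ioo p q, w u) ≤ ∫ u in Ioo p q, (gU - fL) u :=
    setIntegral_mono_on hwi (hgUi.sub hfLi) measurableSet_Ioo hgf
  have hIoo : (∫ u in Ioo p q, w u) = ∫ u in p..q, w u := by
    rw [intervalIntegral.integral_of_le hpq, MeasureTheory.integral_Ioc_eq_integral_Ioo]
  -- lower bound π r²/4 ≤ ∫ p..q w
  set α := min x0 r with hαdef
  set β := min (a - x0) r with hβdef
  have hpα : p - x0 = -α := by
    rcases le_total x0 r with h | h
    · have h1 : p = 0 := max_eq_left (by linarith)
      have h2 : α = x0 := min_eq_left h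
      rw [h1, h2]; ring
    · have h1 : p = x0 - r := max_eq_right (by linarith)
      have h2 : α = r := min_eq_right h
      rw [h1, h2]; ring
  have hqβ : q - x0 = β := by
    rcases le_total (a - x0) r with h | h
    · have h1 : q = a := min_eq_left (by linarith)
      have h2 : β = a - x0 := min_eq_left h
      rw [h1, h2]
    · have h1 : q = x0 + r := min_eq_right (by linarith)
      have h2 : β = r := min_eq_right h
      rw [h1, h2]; ring
  have hcomp : (∫ u in p..q, w u)
      = ∫ t in (p - x0)..(q - x0), Real.sqrt (r^2 - t^2) :=
    intervalIntegral.integral_comp_sub_right (fun t => Real.sqrt (r^2 - t^2)) x0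
  have hcsqrt : Continuous (fun t : ℝ => Real.sqrt (r^2 - t^2)) :=
    Real.continuous_sqrt.comp (continuous_const.sub (continuous_pow 2))
  have hneg : (∫ t in (-α)..(0:ℝ), Real.sqrt (r^2-t^2))
      = ∫ t in (0:ℝ)..α, Real.sqrt (r^2-t^2) := by
    have := intervalIntegral.integral_comp_neg (a := (0:ℝ)) (b := α)
      (fun t => Real.sqrt (r^2 - t^2))
    simp only [neg_sq, neg_zero] at this
    rw [← this]
  have hsplit2 : (∫ t in (-α)..β, Real.sqrt (r^2-t^2))
      = (∫ t in (0:ℝ)..α, Real.sqrt (r^2-t^2)) + ∫ t in (0:ℝ)..β, Real.sqrt (r^2-t^2) := by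
    rw [← intervalIntegral.integral_add_adjacent_intervals
      (hcsqrt.intervalIntegrable (-α) 0) (hcsqrt.intervalIntegrable 0 β), hneg]
  have hα0 : 0 ≤ α := le_min hx0.1 hr0.le
  have hβ0 : 0 ≤ β := le_min (by linarith [hx0.2]) hr0.le
  have hαr : α ≤ r := min_le_right _ _
  have hβr : β ≤ r := min_le_right _ _
  have hsum : r ≤ α + β := by
    rcases le_total r x0 with h | h
    · have h1 : α = r := min_eq_right h
      linarith
    · rcases le_total r (a - x0) with h2 | h2
      · have h1 : β = r := min_eq_right h2
        linarith
      · have h3 : α = x0 := min_eq_left h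
        have h4 : β = a - x0 := min_eq_left h2
        rw [h3, h4]; linarith
  have hmain : Real.pi * r^2/4 ≤ ∫ u in p..q, w u := by
    rw [hcomp, hpα, hqβ, hsplit2]
    exact quarter_superadd r α β hr0 hα0 hβ0 hαr hβr hsum
  -- transfer of volume
  have htrans : volume (Metric.ball x r ∩ R) = volume S := by
    have hkey : Metric.ball x r ∩ R
        = (MeasurableEquiv.toLp 2 (Fin 2 → ℝ)).symm ⁻¹'
            (MeasurableEquiv.finTwoArrow ⁻¹' S) := by
      ext pp
      have hdist : dist pp x = Real.sqrt ((pp 0 - x0)^2 + (pp 1 - x1)^2) := by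
        rw [EuclideanSpace.dist_eq, Fin.sum_univ_two, Real.dist_eq, Real.dist_eq,
          sq_abs, sq_abs]
      simp only [mem_inter_iff, Metric.mem_ball, hR, mem_setOf_eq, mem_preimage,
        MeasurableEquiv.finTwoArrow_apply, MeasurableEquiv.coe_toLp_symm,
        hSdef]
      rw [hdist, Real.sqrt_lt' hr0]
    rw [hkey,
      MeasurePreserving.measure_preimage (EuclideanSpace.volume_preserving_symm_measurableEquiv_toLp (Fin 2))
        ((hSm.preimage (MeasurableEquiv.measurable _)).nullMeasurableSet),
      MeasurePreserving.measure_preimage (volume_preserving_finTwoArrow ℝ)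
        hSm.nullMeasurableSet]
  -- the min is π r²/4
  have hmin : min (a*b) (Real.pi * r^2/4) = Real.pi * r^2/4 := by
    apply min_eq_right
    have h1 : r^2 ≤ a * b := by
      have h := mul_le_mul hra hrb hr0.le ha.le
      calc r^2 = r * r := sq r
        _ ≤ a * b := h
    have h2 : Real.pi * r^2 ≤ 4 * (a*b) :=
      calc Real.pi * r^2 ≤ 4 * r^2 :=
            mul_le_mul_of_nonneg_right Real.pi_le_four (sq_nonneg r)
        _ ≤ 4 * (a*b) := by linarith
    linarith
  rw [hmin]
  calc ENNReal.ofReal (Real.pi * r^2/4)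
      ≤ ENNReal.ofReal (∫ u in Ioo p q, (gU - fL) u) :=
        ENNReal.ofReal_le_ofReal (by rw [← hIoo] at hmain; linarith)
    _ = volume.prod volume (regionBetween fL gU (Ioo p q)) := hreg.symm
    _ = volume (regionBetween fL gU (Ioo p q)) := by rw [← MeasureTheory.Measure.volume_eq_prod]
    _ ≤ volume S := measure_mono hTsub
    _ = volume (Metric.ball x r ∩ R) := htrans.symm
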